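/- For 1/2 < H < 1 and all 0 ≤ s ≤ t, letting β_H = 2 - 2^{2H-1}, one has β_H (t-s)^{2H} ≤ C_H(t,t) - 2C_H(s,t) + C_H(s,s) ≤ (t-s)^{2H}, where C_H(s,t) = s^{2H} + t^{2H} - (1/2)[(s+t)^{2H} + |s-t|^{2H}]. -/

import Mathlib

/-- Covariance of sub-fractional Brownian motion. -/
noncomputable def subfbmCov (H s t : ℝ) : ℝ :=
  s ^ (2 * H) + t ^ (2 * H) - (1 / 2) * ((s + t) ^ (2 * H) + |s - t| ^ (2 * H))

lemma sfbm_rpow_concave_mid {q : ℝ} (hq0 : 0 ≤ q) (hq1 : q ≤ 1) {x y : ℝ} (hx : 0 ≤ x)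
    (hy : 0 ≤ y) : x ^ q + y ^ q ≤ 2 * ((x + y) / 2) ^ q := by
  have h := (Real.concaveOn_rpow hq0 hq1).2 (Set.mem_Ici.2 hx) (Set.mem_Ici.2 hy)
      (by norm_num : (0:ℝ) ≤ 1/2) (by norm_num : (0:ℝ) ≤ 1/2) (by norm_num)
  simp only [smul_eq_mul] at h
  have e : (1/2 : ℝ) * x + (1/2) * y = (x + y) / 2 := by ring
  rw [e] at h
  linarith

lemma sfbm_aux_lower (p : ℝ) (hp1 : 1 ≤ p) (hp2 : p ≤ 2) {a : ℝ} (ha : 0 ≤ a) {b : ℝ}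
    (hb : 0 ≤ b) :
    (2*a+b) ^ p + b ^ p + 2 * a ^ p ≤ 2 * (a+b) ^ p + (2*a) ^ p := by
  set F : ℝ → ℝ := fun x => 2*(a+x)^p + (2*a)^p - (2*a+x)^p - x^p - 2*a^p with hF
  have hderiv : ∀ x : ℝ,
      HasDerivAt F (2*(p*(a+x)^(p-1)) - p*(2*a+x)^(p-1) - p*x^(p-1)) x := by
    intro x
    have h1 : HasDerivAt (fun x : ℝ => (a+x)^p) (p*(a+x)^(p-1)) x := by
      have := (Real.hasDerivAt_rpow_const (x := a+x) (p := p) (Or.inr hp1)).comp x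
        ((hasDerivAt_id x).const_add a)
      rw [mul_one] at this; exact this
    have h2 : HasDerivAt (fun x : ℝ => (2*a+x)^p) (p*(2*a+x)^(p-1)) x := by
      have := (Real.hasDerivAt_rpow_const (x := 2*a+x) (p := p) (Or.inr hp1)).comp x
        ((hasDerivAt_id x).const_add (2*a))
      rw [mul_one] at this; exact this
    have h3 : HasDerivAt (fun x : ℝ => x^p) (p*x^(p-1)) x :=
      Real.hasDerivAt_rpow_const (Or.inr hp1)
    have := ((((h1.const_mul 2).add_const ((2*a)^p)).sub h2).sub h3).sub_const (2*a^p)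
    exact this
  have hmono : MonotoneOn F (Set.Ici 0) := by
    apply monotoneOn_of_deriv_nonneg (convex_Ici 0)
    · exact fun x _ => (hderiv x).continuousAt.continuousWithinAt
    · exact fun x _ => (hderiv x).differentiableAt.differentiableWithinAt
    · rw [interior_Ici]
      intro x hx
      rw [(hderiv x).deriv]
      have hx0 : (0:ℝ) ≤ x := le_of_lt hx
      have hconc := sfbm_rpow_concave_mid (q := p - 1) (by linarith) (by linarith)
        (x := 2*a+x) (y := x) (by linarith) hx0
      have e : ((2*a+x) + x)/2 = a + x := by ring
      rw [e] at hconc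
      nlinarith [mul_le_mul_of_nonneg_left hconc (by linarith : (0:ℝ) ≤ p)]
  have h0 : F 0 ≤ F b := hmono (Set.mem_Ici.2 le_rfl) (Set.mem_Ici.2 hb) hb
  have hF0 : F 0 = 0 := by
    simp [hF, Real.zero_rpow (by linarith : p ≠ 0)]
  rw [hF0] at h0
  simp only [hF] at h0
  linarith

theorem subfbm_increment_variance_bounds_high (H : ℝ) (hH : 1 / 2 < H ∧ H < 1)
    (s t : ℝ) (hs : 0 ≤ s) (hst : s ≤ t) :
    (2 - 2 ^ (2 * H - 1)) * (t - s) ^ (2 * H) ≤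
        subfbmCov H t t - 2 * subfbmCov H s t + subfbmCov H s s ∧
      subfbmCov H t t - 2 * subfbmCov H s t + subfbmCov H s s ≤ (t - s) ^ (2 * H) := by
  obtain ⟨hH1, hH2⟩ := hH
  have hp1 : (1:ℝ) < 2 * H := by linarith
  have hp2 : 2 * H < 2 := by linarith
  have hpne : (2 * H : ℝ) ≠ 0 := by linarith
  have ht : (0:ℝ) ≤ t := hs.trans hst
  have hts : (0:ℝ) ≤ t - s := by linarith
  have habs1 : |s - t| = t - s := by rw [abs_sub_comm]; exact abs_of_nonneg hts
  have hD : subfbmCov H t t - 2 * subfbmCov H s t + subfbmCov H s s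
      = (t-s)^(2*H) + (s+t)^(2*H) - (1/2)*((2*t)^(2*H) + (2*s)^(2*H)) := by
    simp only [subfbmCov, habs1, sub_self, abs_zero, Real.zero_rpow hpne]
    rw [show t + t = 2*t by ring, show s + s = 2*s by ring]
    ring
  rw [hD]
  -- lower bound via sfbm_aux_lower
  have hlow := sfbm_aux_lower (2*H) hp1.le hp2.le (a := t - s) hts (b := 2*s)
    (by linarith)
  rw [show 2*(t-s)+2*s = 2*t by ring, show (t-s)+2*s = s+t by ring] at hlow
  have hmul : (2*(t-s))^(2*H) = 2^(2*H) * (t-s)^(2*H) :=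
    Real.mul_rpow (by norm_num) hts
  rw [hmul] at hlow
  have hhalf : (2:ℝ)^(2*H-1) = 2^(2*H) / 2 := by
    rw [Real.rpow_sub (by norm_num : (0:ℝ) < 2), Real.rpow_one]
  -- upper bound via convexity
  have hconv := (convexOn_rpow hp1.le).2 (Set.mem_Ici.2 (by linarith : (0:ℝ) ≤ 2*s))
    (Set.mem_Ici.2 (by linarith : (0:ℝ) ≤ 2*t))
    (by norm_num : (0:ℝ) ≤ 1/2) (by norm_num : (0:ℝ) ≤ 1/2) (by norm_num)
  simp only [smul_eq_mul] at hconv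
  rw [show (1/2:ℝ)*(2*s) + (1/2)*(2*t) = s + t by ring] at hconv
  constructor
  · rw [hhalf]; linarith
  · linarith
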